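/- Let I ⊆ ℝ be an interval, u : I → ℝ, and let w : U × I → ℂ be such that for each t ∈ I the map z ↦ w(z,t) is holomorphic on U with |w(z,t)| < 1, for each z ∈ U the map t ↦ w(z,t) is differentiable and satisfies the Löwner equation ∂w/∂t = −w·p(w,u(t)), the map z ↦ ∂w/∂t(z,t) is holomorphic on U, the z-derivative ∂_z w(z,t) is nonvanishing, and the mixed partial derivatives commute: ∂_t ∂_z w = ∂_z ∂_t w. Then for any fixed holomorphic function h : U → ℂ, the function t ↦ h(z)/∂_z w(z,t) is differentiable and satisfies d/dt [h(z)/∂_z w(z,t)] = (h(z)/∂_z w(z,t)) · [ (e^{iu(t)}+w)/(e^{iu(t)}−w) + 2e^{iu(t)}w/(e^{iu(t)}−w)² ] for every z ∈ U and t ∈ I. -/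

import Mathlib

open Complex Metric

/-- The Löwner kernel `p(ζ, u) = (e^{iu} + ζ)/(e^{iu} - ζ)`. -/
noncomputable def lkernel (ζ : ℂ) (u : ℝ) : ℂ :=
  (Complex.exp (u * Complex.I) + ζ) / (Complex.exp (u * Complex.I) - ζ)

lemma lkernel_denom_ne_zero {ζ : ℂ} {u : ℝ} (hζ : ‖ζ‖ < 1) :
    Complex.exp ((u : ℂ) * Complex.I) - ζ ≠ 0 := by
  intro hc
  have he : ‖Complex.exp ((u : ℂ) * Complex.I)‖ = 1 :=
    Complex.norm_exp_ofReal_mul_I u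
  rw [sub_eq_zero] at hc
  rw [hc] at he
  exact absurd he (ne_of_lt hζ)

/-- Derivative in ζ of `-ζ * lkernel ζ u`. -/
lemma hasDerivAt_neg_mul_lkernel (u : ℝ) {ζ : ℂ} (hζ : ‖ζ‖ < 1) :
    HasDerivAt (fun ζ => -ζ * lkernel ζ u)
      (-(lkernel ζ u + 2 * Complex.exp ((u : ℂ) * Complex.I) * ζ /
          (Complex.exp ((u : ℂ) * Complex.I) - ζ) ^ 2)) ζ := by
  set e := Complex.exp ((u : ℂ) * Complex.I) with he
  have hne : e - ζ ≠ 0 := lkernel_denom_ne_zero hζ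
  have h1 := ((hasDerivAt_const ζ e).add (hasDerivAt_id ζ)).div
      ((hasDerivAt_const ζ e).sub (hasDerivAt_id ζ)) hne
  have h2 := ((hasDerivAt_id ζ).neg).mul h1
  change HasDerivAt (fun ζ : ℂ => -ζ * ((e + ζ) / (e - ζ)))
    (-1 * ((e + ζ) / (e - ζ)) + -ζ * (((0 + 1) * (e - ζ) - (e + ζ) * (0 - 1)) / (e - ζ) ^ 2)) ζ at h2
  have : (fun ζ : ℂ => -ζ * ((e + ζ) / (e - ζ))) = fun ζ => -ζ * lkernel ζ u := by
    funext x; rfl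
  rw [this] at h2
  convert h2 using 1
  unfold lkernel
  rw [← he]
  field_simp
  ring

/-- The z-derivative of the right hand side of the Löwner ODE. -/
lemma deriv_rhs (u : ℝ) (w : ℂ → ℝ → ℂ) (t : ℝ) {z : ℂ} (hz : z ∈ ball (0 : ℂ) 1)
    (hol : DifferentiableOn ℂ (fun z => w z t) (ball (0 : ℂ) 1))
    (hb : ‖w z t‖ < 1) :
    deriv (fun z => -(w z t) * lkernel (w z t) (u)) z =
      -(lkernel (w z t) u + 2 * Complex.exp ((u : ℂ) * Complex.I) * w z t /
          (Complex.exp ((u : ℂ) * Complex.I) - w z t) ^ 2) * deriv (fun z => w z t) z := by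
  have hda : DifferentiableAt ℂ (fun z => w z t) z :=
    hol.differentiableAt (isOpen_ball.mem_nhds hz)
  have hW : HasDerivAt (fun z => w z t) (deriv (fun z => w z t) z) z := hda.hasDerivAt
  have := (hasDerivAt_neg_mul_lkernel u hb).comp z hW
  have heq : ((fun ζ : ℂ => -ζ * lkernel ζ u) ∘ fun z => w z t)
      = fun z => -(w z t) * lkernel (w z t) u := rfl
  rw [heq] at this
  exact this.deriv

theorem hasDerivWithinAt_div_derivZ_loewner
    (I : Set ℝ) (hI : Convex ℝ I) (u : ℝ → ℝ) (w : ℂ → ℝ → ℂ)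
    (hol : ∀ t ∈ I, DifferentiableOn ℂ (fun z => w z t) (ball (0 : ℂ) 1))
    (hbd : ∀ t ∈ I, ∀ z ∈ ball (0 : ℂ) 1, ‖w z t‖ < 1)
    (hode : ∀ z ∈ ball (0 : ℂ) 1, ∀ t ∈ I,
      HasDerivWithinAt (fun s => w z s) (-(w z t) * lkernel (w z t) (u t)) I t)
    (hthol : ∀ t ∈ I,
      DifferentiableOn ℂ (fun z => -(w z t) * lkernel (w z t) (u t)) (ball (0 : ℂ) 1))
    (hnz : ∀ t ∈ I, ∀ z ∈ ball (0 : ℂ) 1, deriv (fun z => w z t) z ≠ 0)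
    (hmix : ∀ z ∈ ball (0 : ℂ) 1, ∀ t ∈ I,
      HasDerivWithinAt (fun s => deriv (fun z => w z s) z)
        (deriv (fun z => -(w z t) * lkernel (w z t) (u t)) z) I t)
    (h : ℂ → ℂ) (hh : DifferentiableOn ℂ h (ball (0 : ℂ) 1)) :
    ∀ z ∈ ball (0 : ℂ) 1, ∀ t ∈ I,
      HasDerivWithinAt (fun s => h z / deriv (fun z => w z s) z)
        ((h z / deriv (fun z => w z t) z) *
          (lkernel (w z t) (u t) +
            2 * Complex.exp ((u t : ℂ) * Complex.I) * w z t /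
              (Complex.exp ((u t : ℂ) * Complex.I) - w z t) ^ 2)) I t := by
  intro z hz t ht
  have hW := hnz t ht z hz
  have hd := (hasDerivWithinAt_const t I (h z)).div (hmix z hz t ht) hW
  convert hd using 1
  · rfl
  · rfl
  rw [deriv_rhs (u t) w t hz (hol t ht) (hbd t ht z hz)]
  set W := deriv (fun z => w z t) z
  set D := lkernel (w z t) (u t) + 2 * Complex.exp ((u t : ℂ) * Complex.I) * w z t /
      (Complex.exp ((u t : ℂ) * Complex.I) - w z t) ^ 2
  field_simp
  ring
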